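/- For n ≥ 3 and 1 ≤ k ≤ n-1, the number of disrupted random walk labelings of the cycle graph C_n satisfies L_k(C_n) = n·2^{k-1}, and L_n(C_n) = L(C_n) = n·2^{n-2}. -/

import Mathlib

open Finset

/-- A sequence of `k` distinct vertices of `G` such that every vertex other than the
first is adjacent to some earlier vertex (a random walk labeling disrupted after the
`k`-th vertex). -/
def IsRWLPrefix {V : Type*} (G : SimpleGraph V) {k : ℕ} (v : Fin k → V) : Prop :=
  Function.Injective v ∧ ∀ i : Fin k, i.val ≠ 0 → ∃ j : Fin k, j < i ∧ G.Adj (v j) (v i)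

/-- `L_k(G)`: the number of random walk labelings of `G` disrupted after the `k`-th
vertex.  For `k = 0` this equals `1` (the empty sequence). -/
noncomputable def rwlPrefixCount {V : Type*} (G : SimpleGraph V) (k : ℕ) : ℕ :=
  Nat.card {v : Fin k → V // IsRWLPrefix G v}

/-- `L(G)`: the number of random walk labelings of `G`, i.e. orderings of all the
vertices of `G` in which every vertex other than the first is adjacent to some
earlier vertex. -/
noncomputable def rwlCount {V : Type*} (G : SimpleGraph V) [Fintype V] : ℕ :=
  rwlPrefixCount G (Fintype.card V)

/-! ### Auxiliary machinery -/

open Fin.CommRing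

private theorem finIntCast_eq_iff (m : ℕ) (a b : ℤ) :
    ((a : Fin (m+3)) = b) ↔ ((m:ℤ)+3) ∣ a - b := by
  have h : ((a : Fin (m+3)) = b) ↔ ((a : ZMod (m+3)) = (b : ZMod (m+3))) := Iff.rfl
  rw [h, ZMod.intCast_eq_intCast_iff]
  constructor
  · intro hh; have := dvd_sub_comm.mp hh.dvd; push_cast at this; convert this using 2
  · intro hh; have : a ≡ b [ZMOD ((m:ℤ)+3)] := (Int.modEq_iff_dvd.mpr (dvd_sub_comm.mp hh))
    simpa using this

private theorem finIntCast_inj (m : ℕ) (a b : ℤ) (ha : |a - b| < (m:ℤ)+3) :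
    ((a : Fin (m+3)) = b) ↔ a = b := by
  rw [finIntCast_eq_iff]
  constructor
  · intro h; have := Int.eq_zero_of_abs_lt_dvd h ha; omega
  · intro h; simp [h]

/-- number of `true`s among `ε 0, …, ε (i-1)`. -/
private def Tc (ε : ℕ → Bool) : ℕ → ℕ
  | 0 => 0
  | i+1 => Tc ε i + (if ε i then 1 else 0)

/-- number of `false`s among `ε 0, …, ε (i-1)`. -/
private def Fc (ε : ℕ → Bool) : ℕ → ℕ
  | 0 => 0
  | i+1 => Fc ε i + (if ε i then 0 else 1)

private lemma Tc_add_Fc (ε : ℕ → Bool) : ∀ i, Tc ε i + Fc ε i = i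
  | 0 => rfl
  | i+1 => by
    simp only [Tc, Fc]; have := Tc_add_Fc ε i
    rcases Bool.dichotomy (ε i) with h | h <;> simp [h] <;> omega

/-- the displacement of the `i`-th vertex from the starting vertex. -/
private def ee (ε : ℕ → Bool) : ℕ → ℤ
  | 0 => 0
  | i+1 => if ε i then (Tc ε i + 1 : ℤ) else -((Fc ε i : ℤ) + 1)

private lemma Tc_congr {ε ε' : ℕ → Bool} : ∀ {i}, (∀ j < i, ε j = ε' j) → Tc ε i = Tc ε' i
  | 0, _ => rfl
  | i+1, h => by
    simp only [Tc, Tc_congr (fun j hj => h j (Nat.lt_succ_of_lt hj)), h i (Nat.lt_succ_self i)]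

private lemma Fc_congr {ε ε' : ℕ → Bool} : ∀ {i}, (∀ j < i, ε j = ε' j) → Fc ε i = Fc ε' i
  | 0, _ => rfl
  | i+1, h => by
    simp only [Fc, Fc_congr (fun j hj => h j (Nat.lt_succ_of_lt hj)), h i (Nat.lt_succ_self i)]

private lemma ee_congr {ε ε' : ℕ → Bool} : ∀ {i}, (∀ j < i, ε j = ε' j) → ee ε i = ee ε' i
  | 0, _ => rfl
  | i+1, h => by
    simp only [ee, Tc_congr (fun j hj => h j (Nat.lt_succ_of_lt hj)),
      Fc_congr (fun j hj => h j (Nat.lt_succ_of_lt hj)), h i (Nat.lt_succ_self i)]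

private lemma ee_image (ε : ℕ → Bool) :
    ∀ i, (Finset.range (i+1)).image (ee ε) = Finset.Icc (-(Fc ε i : ℤ)) (Tc ε i)
  | 0 => by simp [ee, Tc, Fc]
  | i+1 => by
    rw [Finset.range_add_one, Finset.image_insert, ee_image ε i]
    rcases Bool.dichotomy (ε i) with h | h <;>
    · ext x
      simp only [ee, Tc, Fc, h, if_true, if_false, Finset.mem_insert, Finset.mem_Icc]
      push_cast
      omega

private lemma ee_injOn (ε : ℕ → Bool) (i : ℕ) : Set.InjOn (ee ε) (Finset.range (i+1)) := by
  apply Finset.injOn_of_card_image_eq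
  rw [ee_image ε i, Finset.card_range, Int.card_Icc]
  have := Tc_add_Fc ε i
  omega

private lemma ee_mem (ε : ℕ → Bool) {i j : ℕ} (h : j ≤ i) :
    -(Fc ε i : ℤ) ≤ ee ε j ∧ ee ε j ≤ Tc ε i := by
  have : ee ε j ∈ (Finset.range (i+1)).image (ee ε) :=
    Finset.mem_image_of_mem _ (Finset.mem_range.mpr (by omega))
  rw [ee_image ε i, Finset.mem_Icc] at this
  exact this

private lemma exists_ee_eq (ε : ℕ → Bool) (i : ℕ) {t : ℤ}
    (h1 : -(Fc ε i : ℤ) ≤ t) (h2 : t ≤ Tc ε i) : ∃ j ≤ i, ee ε j = t := by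
  have : t ∈ Finset.Icc (-(Fc ε i : ℤ)) (Tc ε i) := Finset.mem_Icc.mpr ⟨h1, h2⟩
  rw [← ee_image ε i, Finset.mem_image] at this
  obtain ⟨j, hj, hje⟩ := this
  exact ⟨j, by simp at hj; omega, hje⟩

/-- the vertex sequence encoded by a starting vertex `s` and direction choices `ε`. -/
private def enc (m : ℕ) (s : Fin (m+3)) (ε : ℕ → Bool) (i : ℕ) : Fin (m+3) :=
  s + ((ee ε i : ℤ) : Fin (m+3))

private lemma enc_sub (m : ℕ) (s : Fin (m+3)) (ε : ℕ → Bool) (i j : ℕ) :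
    enc m s ε i - enc m s ε j = ((ee ε i - ee ε j : ℤ) : Fin (m+3)) := by
  simp only [enc, Int.cast_sub]; ring

private lemma enc_inj (m : ℕ) (s : Fin (m+3)) (ε : ℕ → Bool) {K : ℕ} (hK : K ≤ m+1)
    {i j : ℕ} (hi : i ≤ K) (hj : j ≤ K) (h : enc m s ε i = enc m s ε j) : i = j := by
  have hc : ((ee ε i : ℤ) : Fin (m+3)) = ((ee ε j : ℤ) : Fin (m+3)) := by
    have := congrArg (fun x => x - s) h
    simpa [enc, add_comm, add_sub_cancel_right] using this
  have hmi := ee_mem ε hi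
  have hmj := ee_mem ε hj
  have hTF := Tc_add_Fc ε K
  have habs : |ee ε i - ee ε j| < (m:ℤ)+3 := by
    rw [abs_lt]; push_cast at hmi hmj ⊢; omega
  have : ee ε i = ee ε j := (finIntCast_inj m _ _ habs).mp hc
  exact ee_injOn ε K (by simp; omega) (by simp; omega) this

private lemma enc_isPrefix (m K : ℕ) (hK : K ≤ m+1) (s : Fin (m+3)) (ε : ℕ → Bool) :
    IsRWLPrefix (SimpleGraph.cycleGraph (m+3)) (fun i : Fin (K+1) => enc m s ε i.val) := by
  constructor
  · intro i j h
    exact Fin.ext (enc_inj m s ε hK (by omega) (by omega) h)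
  · intro i hi
    obtain ⟨i', hi'⟩ : ∃ i', i.val = i' + 1 := ⟨i.val - 1, by omega⟩
    rcases Bool.dichotomy (ε i') with h | h
    · obtain ⟨j, hj, hje⟩ := exists_ee_eq ε i' (t := -(Fc ε i' : ℤ)) le_rfl (by
        have := Tc_add_Fc ε i'; push_cast; omega)
      refine ⟨⟨j, by omega⟩, by simp [Fin.lt_def]; omega, ?_⟩
      apply SimpleGraph.cycleGraph_adj.mpr
      left
      rw [enc_sub]
      have h2 : ee ε i.val = -((Fc ε i' : ℤ) + 1) := by rw [hi']; simp [ee, h]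
      rw [h2]
      show (((ee ε j) - (-((Fc ε i' : ℤ) + 1)) : ℤ) : Fin (m+3)) = 1
      rw [hje]
      norm_num
    · obtain ⟨j, hj, hje⟩ := exists_ee_eq ε i' (t := (Tc ε i' : ℤ)) (by
        have := Tc_add_Fc ε i'; push_cast; omega) le_rfl
      refine ⟨⟨j, by omega⟩, by simp [Fin.lt_def]; omega, ?_⟩
      apply SimpleGraph.cycleGraph_adj.mpr
      right
      rw [enc_sub]
      have h2 : ee ε i.val = (Tc ε i' : ℤ) + 1 := by rw [hi']; simp [ee, h]
      rw [h2]
      show ((((Tc ε i' : ℤ) + 1) - (ee ε j) : ℤ) : Fin (m+3)) = 1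
      rw [hje]
      norm_num

/-- every RWL prefix on the cycle is of the form `enc`. -/
private lemma prefix_surj (m : ℕ) : ∀ K, K ≤ m+1 → ∀ v : Fin (K+1) → Fin (m+3),
    IsRWLPrefix (SimpleGraph.cycleGraph (m+3)) v →
    ∃ s ε, ∀ i : Fin (K+1), v i = enc m s ε i.val := by
  intro K
  induction K with
  | zero =>
    intro _ v _
    refine ⟨v 0, fun _ => false, fun i => ?_⟩
    have : i = 0 := Fin.ext (by omega)
    simp [this, enc, ee]
  | succ K IH =>
    intro hK v hv
    obtain ⟨hinj, hadj⟩ := hv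
    have hv' : IsRWLPrefix (SimpleGraph.cycleGraph (m+3)) (v ∘ Fin.castSucc) := by
      constructor
      · exact hinj.comp (Fin.castSucc_injective _)
      · intro i hi
        obtain ⟨j, hj, hadjj⟩ := hadj (Fin.castSucc i) (by simpa using hi)
        refine ⟨⟨j.val, by omega⟩, by simp [Fin.lt_def]; exact hj, ?_⟩
        have : Fin.castSucc (⟨j.val, by omega⟩ : Fin (K+1)) = j := by
          simp [Fin.ext_iff]
        rw [Function.comp_apply, Function.comp_apply, this]
        exact hadjj
    obtain ⟨s, ε, hse⟩ := IH (by omega) (v ∘ Fin.castSucc) hv'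
    have hval : ∀ i : Fin (K+2), i.val ≤ K → v i = enc m s ε i.val := by
      intro i hi
      have := hse ⟨i.val, by omega⟩
      simpa [Fin.ext_iff] using this
    -- the last vertex
    set L : Fin (K+2) := ⟨K+1, by omega⟩ with hL
    obtain ⟨j, hjL, hadjL⟩ := hadj L (by simp [hL])
    have hjK : j.val ≤ K := by
      have := hjL
      simp [Fin.lt_def, hL] at this
      omega
    have hvj : v j = s + ((ee ε j.val : ℤ) : Fin (m+3)) := hval j hjK
    have hTF := Tc_add_Fc ε K
    have hmj := ee_mem ε hjK
    -- v L = s + cast t  for t = ee ε j.val ± 1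
    have hcases : v L = s + ((ee ε j.val + 1 : ℤ) : Fin (m+3)) ∨
        v L = s + ((ee ε j.val - 1 : ℤ) : Fin (m+3)) := by
      rcases SimpleGraph.cycleGraph_adj.mp hadjL with h | h
      · right
        have : v L = v j - 1 := by rw [← h]; ring
        rw [this, hvj]; push_cast; ring
      · left
        have : v L = v j + 1 := by rw [← h]; ring
        rw [this, hvj]; push_cast; ring
    obtain ⟨t, ht, hvL⟩ : ∃ t : ℤ, (t = ee ε j.val + 1 ∨ t = ee ε j.val - 1) ∧
        v L = s + ((t : ℤ) : Fin (m+3)) := by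
      rcases hcases with h | h
      · exact ⟨ee ε j.val + 1, Or.inl rfl, h⟩
      · exact ⟨ee ε j.val - 1, Or.inr rfl, h⟩
    -- t is not an already used displacement
    have hnotused : ∀ j' ≤ K, t ≠ ee ε j' := by
      intro j' hj' hteq
      obtain ⟨j'', hj''⟩ : ∃ j'' : Fin (K+2), j''.val = j' := ⟨⟨j', by omega⟩, rfl⟩
      have : v L = v j'' := by
        rw [hvL, hval j'' (by omega), hj'', hteq]
        rfl
      have := hinj this
      rw [this] at hL
      simp [Fin.ext_iff] at hL
      omega
    have htb : t = (Tc ε K : ℤ) + 1 ∨ t = -(Fc ε K : ℤ) - 1 := by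
      by_contra hcon
      push_neg at hcon
      have h1 : -(Fc ε K : ℤ) ≤ t := by omega
      have h2 : t ≤ (Tc ε K : ℤ) := by omega
      obtain ⟨j', hj', hje'⟩ := exists_ee_eq ε K h1 h2
      exact hnotused j' hj' hje'.symm
    -- extend ε
    set ε' : ℕ → Bool := fun i => if i = K then decide (0 < t) else ε i with hε'
    have hagree : ∀ i ≤ K, ∀ j < i, ε' j = ε j := by
      intro i hi j hji; simp [hε']; intro hc; omega
    have heq_low : ∀ i ≤ K, ee ε' i = ee ε i := by
      intro i hi
      exact ee_congr (fun j hj => hagree i hi j hj)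
    have heelast : ee ε' (K+1) = t := by
      have hTc : Tc ε' K = Tc ε K := Tc_congr (fun j hj => by simp [hε']; intro hc; omega)
      have hFc : Fc ε' K = Fc ε K := Fc_congr (fun j hj => by simp [hε']; intro hc; omega)
      rcases htb with h | h
      · have hek : ε' K = true := by simp [hε', h]
        simp [ee, hek, hTc, h]
      · have hek : ε' K = false := by simp [hε', h]
        simp [ee, hek, hFc, h]
        omega
    refine ⟨s, ε', fun i => ?_⟩
    by_cases hiK : i.val ≤ K
    · rw [hval i hiK, enc, enc, heq_low i.val hiK]
    · have : i.val = K + 1 := by omega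
      have hiL : i = L := by simp [Fin.ext_iff, this, hL]
      rw [hiL, hvL]
      show s + ((t : ℤ) : Fin (m+3)) = s + ((ee ε' (K+1) : ℤ) : Fin (m+3))
      rw [heelast]

/-- the count for `1 ≤ k ≤ n - 1`. -/
private lemma count_eq (m K : ℕ) (hK : K ≤ m+1) :
    rwlPrefixCount (SimpleGraph.cycleGraph (m+3)) (K+1) = (m+3) * 2^K := by
  classical
  set ext : (Fin K → Bool) → (ℕ → Bool) := fun b j => if h : j < K then b ⟨j, h⟩ else false
    with hext
  have hf : ∀ p : Fin (m+3) × (Fin K → Bool),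
      IsRWLPrefix (SimpleGraph.cycleGraph (m+3))
        (fun i : Fin (K+1) => enc m p.1 (ext p.2) i.val) :=
    fun p => enc_isPrefix m K hK p.1 (ext p.2)
  set f : Fin (m+3) × (Fin K → Bool) →
      {v : Fin (K+1) → Fin (m+3) // IsRWLPrefix (SimpleGraph.cycleGraph (m+3)) v} :=
    fun p => ⟨fun i => enc m p.1 (ext p.2) i.val, hf p⟩ with hfdef
  have hbij : Function.Bijective f := by
    constructor
    · rintro ⟨s, b⟩ ⟨s', b'⟩ h
      have hfun : ∀ i : Fin (K+1), enc m s (ext b) i.val = enc m s' (ext b') i.val :=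
        fun i => congrFun (congrArg Subtype.val h) i
      have hs : s = s' := by
        have := hfun 0
        simpa [enc, ee] using this
      subst hs
      have hb : ∀ i : ℕ, ∀ hi : i < K, b ⟨i, hi⟩ = b' ⟨i, hi⟩ := by
        intro i
        induction i using Nat.strong_induction_on with
        | _ i IHi =>
          intro hi
          by_contra hne
          have hag : ∀ j < i, ext b j = ext b' j := by
            intro j hj
            simp only [hext]
            rw [dif_pos (by omega), dif_pos (by omega)]
            exact IHi j hj (by omega)
          have hTc : Tc (ext b) i = Tc (ext b') i := Tc_congr hag
          have hFc : Fc (ext b) i = Fc (ext b') i := Fc_congr hag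
          have hTFi := Tc_add_Fc (ext b) i
          have hi1 := hfun ⟨i+1, by omega⟩
          have hcast : ((ee (ext b) (i+1) : ℤ) : Fin (m+3)) =
              ((ee (ext b') (i+1) : ℤ) : Fin (m+3)) := by
            have := congrArg (fun x => x - s) hi1
            simpa [enc, add_comm, add_sub_cancel_right] using this
          have hebi : ext b i = b ⟨i, hi⟩ := by simp [hext, dif_pos hi]
          have hebi' : ext b' i = b' ⟨i, hi⟩ := by simp [hext, dif_pos hi]
          have habs : |ee (ext b) (i+1) - ee (ext b') (i+1)| < (m:ℤ)+3 := by
            rcases Bool.dichotomy (b ⟨i, hi⟩) with h1 | h1 <;>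
              rcases Bool.dichotomy (b' ⟨i, hi⟩) with h2 | h2 <;>
              simp only [ee, hebi, hebi', h1, h2, if_true, if_false, hTc, hFc] <;>
              (rw [abs_lt]; push_cast; omega)
          have heq : ee (ext b) (i+1) = ee (ext b') (i+1) :=
            (finIntCast_inj m _ _ habs).mp hcast
          rcases Bool.dichotomy (b ⟨i, hi⟩) with h1 | h1 <;>
            rcases Bool.dichotomy (b' ⟨i, hi⟩) with h2 | h2
          · exact hne (by rw [h1, h2])
          · rw [ee, ee, hebi, hebi', h1, h2] at heq
            simp at heq
            omega
          · rw [ee, ee, hebi, hebi', h1, h2] at heq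
            simp at heq
            omega
          · exact hne (by rw [h1, h2])
      have : b = b' := funext fun i => by
        have := hb i.val i.isLt
        simpa using this
      rw [this]
    · rintro ⟨v, hv⟩
      obtain ⟨s, ε, hse⟩ := prefix_surj m K hK v hv
      refine ⟨(s, fun i => ε i.val), ?_⟩
      apply Subtype.ext
      funext i
      show enc m s (ext fun i => ε i.val) i.val = v i
      rw [hse i]
      have hee : ee (ext fun i => ε i.val) i.val = ee ε i.val :=
        ee_congr (fun j hj => by simp only [hext]; rw [dif_pos (by omega)])
      rw [enc, enc, hee]
  rw [rwlPrefixCount, ← Nat.card_eq_of_bijective f hbij]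
  simp [Nat.card_eq_fintype_card]

/-- the last vertex of a full labeling is determined. -/
private lemma full_eq_penult (m : ℕ) :
    rwlPrefixCount (SimpleGraph.cycleGraph (m+3)) (m+3) =
    rwlPrefixCount (SimpleGraph.cycleGraph (m+3)) (m+2) := by
  classical
  set G := SimpleGraph.cycleGraph (m+3) with hG
  have hres : ∀ v : Fin (m+3) → Fin (m+3), IsRWLPrefix G v →
      IsRWLPrefix G (v ∘ Fin.castSucc) := by
    rintro v ⟨hinj, hadj⟩
    constructor
    · exact hinj.comp (Fin.castSucc_injective _)
    · intro i hi
      obtain ⟨j, hj, hadjj⟩ := hadj (Fin.castSucc i) (by simpa using hi)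
      have hjv : j.val < m+2 := by
        have := hj; simp [Fin.lt_def] at this; omega
      refine ⟨⟨j.val, hjv⟩, by simp [Fin.lt_def]; exact hj, ?_⟩
      have : Fin.castSucc (⟨j.val, hjv⟩ : Fin (m+2)) = j := by simp [Fin.ext_iff]
      rw [Function.comp_apply, Function.comp_apply, this]
      exact hadjj
  set Φ : {v : Fin (m+3) → Fin (m+3) // IsRWLPrefix G v} →
      {v : Fin (m+2) → Fin (m+3) // IsRWLPrefix G v} :=
    fun p => ⟨p.val ∘ Fin.castSucc, hres p.val p.prop⟩ with hΦ
  have hbij : Function.Bijective Φ := by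
    constructor
    · rintro ⟨v, hv⟩ ⟨w, hw⟩ h
      have hfun : ∀ i : Fin (m+2), v (Fin.castSucc i) = w (Fin.castSucc i) :=
        fun i => congrFun (congrArg Subtype.val h) i
      apply Subtype.ext
      funext i
      induction i using Fin.lastCases with
      | cast i => exact hfun i
      | last =>
        -- v is bijective
        have hvbij : Function.Bijective v := (Finite.injective_iff_bijective).mp hv.1
        have hwbij : Function.Bijective w := (Finite.injective_iff_bijective).mp hw.1
        obtain ⟨j, hj⟩ := hwbij.2 (v (Fin.last (m+2)))
        induction j using Fin.lastCases with
        | last => exact hj.symm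
        | cast j' =>
          exfalso
          rw [← hfun j'] at hj
          have := hv.1 hj
          exact absurd this (Fin.ne_last_of_lt (Fin.castSucc_lt_last j'))
    · rintro ⟨u, hu⟩
      have hnots : ¬ Function.Surjective u := by
        intro hs
        have := Fintype.card_le_of_surjective u hs
        simp at this
      obtain ⟨x, hx⟩ : ∃ x, ∀ j, u j ≠ x := by
        by_contra hc
        push_neg at hc
        exact hnots fun y => hc y
      set v : Fin (m+3) → Fin (m+3) := Fin.snoc u x with hv
      have hvc : ∀ i : Fin (m+2), v (Fin.castSucc i) = u i := fun i => by
        simp [hv]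
      have hvl : v (Fin.last (m+2)) = x := by simp [hv]
      have hvinj : Function.Injective v := by
        intro i j hij
        induction i using Fin.lastCases with
        | last =>
          induction j using Fin.lastCases with
          | last => rfl
          | cast j' =>
            rw [hvl, hvc] at hij
            exact absurd hij.symm (hx j')
        | cast i' =>
          induction j using Fin.lastCases with
          | last =>
            rw [hvl, hvc] at hij
            exact absurd hij (hx i')
          | cast j' =>
            rw [hvc, hvc] at hij
            rw [hu.1 hij]
      -- x + 1 is in the range of u
      have hxp1 : ∃ j, u j = x + 1 := by
        by_contra hc
        push_neg at hc
        have hcard : (Finset.univ.image u)ᶜ.card = 1 := by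
          rw [Finset.card_compl, Finset.card_image_of_injective _ hu.1]
          simp
        have hx' : x ∈ (Finset.univ.image u)ᶜ := by
          simp only [Finset.mem_compl, Finset.mem_image]
          rintro ⟨j, _, hj⟩
          exact hx j hj
        have hx1' : x + 1 ∈ (Finset.univ.image u)ᶜ := by
          simp only [Finset.mem_compl, Finset.mem_image]
          rintro ⟨j, _, hj⟩
          exact hc j hj
        have hne : x ≠ x + 1 := by
          intro hh
          have : (0 : Fin (m+3)) = 1 := by
            have := congrArg (fun y => y - x) hh
            simpa using this
          simp [Fin.ext_iff] at this
        have : 1 < (Finset.univ.image u)ᶜ.card :=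
          Finset.one_lt_card.mpr ⟨x, hx', x + 1, hx1', hne⟩
        omega
      have hvpre : IsRWLPrefix G v := by
        constructor
        · exact hvinj
        · intro i hi
          induction i using Fin.lastCases with
          | last =>
            obtain ⟨j, hj⟩ := hxp1
            refine ⟨Fin.castSucc j, Fin.castSucc_lt_last j, ?_⟩
            rw [hvc, hvl, hj]
            apply SimpleGraph.cycleGraph_adj.mpr
            left
            ring
          | cast i' =>
            obtain ⟨j, hj, hadjj⟩ := hu.2 i' (by simpa using hi)
            refine ⟨Fin.castSucc j, Fin.castSucc_lt_castSucc_iff.mpr hj, ?_⟩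
            rw [hvc, hvc]
            exact hadjj
      refine ⟨⟨v, hvpre⟩, ?_⟩
      apply Subtype.ext
      funext i
      exact hvc i
  rw [rwlPrefixCount, rwlPrefixCount]
  exact Nat.card_eq_of_bijective Φ hbij

theorem rwl_cycleGraph (n : ℕ) (hn : 3 ≤ n) :
    (∀ k : ℕ, 1 ≤ k → k ≤ n - 1 →
      rwlPrefixCount (SimpleGraph.cycleGraph n) k = n * 2 ^ (k - 1)) ∧
    rwlPrefixCount (SimpleGraph.cycleGraph n) n = rwlCount (SimpleGraph.cycleGraph n) ∧
    rwlCount (SimpleGraph.cycleGraph n) = n * 2 ^ (n - 2) := by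
  obtain ⟨m, rfl⟩ : ∃ m, n = m + 3 := ⟨n - 3, by omega⟩
  refine ⟨?_, ?_, ?_⟩
  · intro k hk1 hk2
    obtain ⟨K, rfl⟩ : ∃ K, k = K + 1 := ⟨k - 1, by omega⟩
    have hK : K ≤ m + 1 := by omega
    rw [count_eq m K hK]
    simp
  · rw [rwlCount, Fintype.card_fin]
  · rw [rwlCount, Fintype.card_fin, full_eq_penult m]
    have : m + 2 = (m + 1) + 1 := rfl
    rw [this, count_eq m (m+1) le_rfl]
    simp
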